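/- Let ρ̂: ℝ^n → ℝ satisfy monotonicity, cash additivity, positive homogeneity, and subadditivity. Then there exists a nonempty convex compact set M ⊆ Δ_n such that ρ̂(x) = max_{a∈M} ∑_{i=1}^n a_i(−x_i) for all x ∈ ℝ^n. -/

import Mathlib

/-- Finite-dimensional robust representation: every coherent risk
estimator `ρ̂ : ℝ^n → ℝ` is the support function (with attained maximum) of a
nonempty convex compact subset of the probability simplex. -/
theorem robust_representation_CRE (n : ℕ) (ρ : (Fin n → ℝ) → ℝ)
    (h_mono : ∀ x y : Fin n → ℝ, (∀ i, x i ≤ y i) → ρ y ≤ ρ x)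
    (h_cash : ∀ (x : Fin n → ℝ) (m : ℝ), ρ (fun i => x i + m) = ρ x - m)
    (h_hom : ∀ (x : Fin n → ℝ) (l : ℝ), 0 ≤ l → ρ (fun i => l * x i) = l * ρ x)
    (h_sub : ∀ x y : Fin n → ℝ, ρ (fun i => x i + y i) ≤ ρ x + ρ y) :
    ∃ M : Set (Fin n → ℝ), M.Nonempty ∧ Convex ℝ M ∧ IsCompact M ∧
      (∀ a ∈ M, (∀ i, 0 ≤ a i) ∧ ∑ i, a i = 1) ∧
      ∀ x : Fin n → ℝ, ∃ a ∈ M,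
        ρ x = ∑ i, a i * (-(x i)) ∧
          ∀ b ∈ M, ∑ i, b i * (-(x i)) ≤ ρ x := by
  -- n = 0 is contradictory with cash additivity
  rcases Nat.eq_zero_or_pos n with hn | hn
  · exfalso
    subst hn
    have h := h_cash (fun _ => 0) 1
    have : (fun i : Fin 0 => (fun _ : Fin 0 => (0:ℝ)) i + 1) = (fun _ : Fin 0 => (0:ℝ)) := by
      funext i; exact i.elim0
    rw [this] at h
    linarith
  have hρ0 : ρ 0 = 0 := by
    have := h_hom 0 0 le_rfl
    simp at this; exact this
  -- sublinearity in the smul form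
  have hN_hom : ∀ c : ℝ, 0 < c → ∀ x : Fin n → ℝ, ρ (c • x) = c * ρ x := by
    intro c hc x
    exact h_hom x c hc.le
  have hN_add : ∀ x y : Fin n → ℝ, ρ (x + y) ≤ ρ x + ρ y := by
    intro x y
    exact h_sub x y
  have hsym : ∀ x : Fin n → ℝ, -ρ (-x) ≤ ρ x := by
    intro x
    have := hN_add x (-x)
    simp only [add_neg_cancel, hρ0] at this
    linarith
  -- Hahn-Banach: for any x₀ there is a linear g ≤ ρ with g x₀ = ρ x₀
  have key : ∀ x₀ : Fin n → ℝ, x₀ ≠ 0 →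
      ∃ g : (Fin n → ℝ) →ₗ[ℝ] ℝ, g x₀ = ρ x₀ ∧ ∀ y, g y ≤ ρ y := by
    intro x₀ hx₀
    have hbound : ∀ z : (LinearPMap.mkSpanSingleton x₀ (ρ x₀) hx₀ :
        (Fin n → ℝ) →ₗ.[ℝ] ℝ).domain,
        (LinearPMap.mkSpanSingleton x₀ (ρ x₀) hx₀) z ≤ ρ z := by
      rintro ⟨z, hz⟩
      obtain ⟨c, rfl⟩ := Submodule.mem_span_singleton.1 hz
      rw [LinearPMap.mkSpanSingleton'_apply]
      rcases le_or_gt 0 c with hc | hc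
      · rcases eq_or_lt_of_le hc with rfl | hc
        · simp [hρ0]
        · rw [hN_hom c hc]; exact le_rfl
      · have h1 : ρ (c • x₀) = (-c) * ρ (-x₀) := by
          have : c • x₀ = (-c) • (-x₀) := by simp
          rw [this, hN_hom (-c) (by linarith)]
        rw [h1]
        have := hsym x₀
        simp only [smul_eq_mul, RingHom.id_apply]
        nlinarith
    obtain ⟨g, hg1, hg2⟩ := exists_extension_of_le_sublinear
      (LinearPMap.mkSpanSingleton x₀ (ρ x₀) hx₀) ρ hN_hom hN_add hbound
    refine ⟨g, ?_, hg2⟩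
    have := hg1 ⟨x₀, Submodule.mem_span_singleton_self x₀⟩
    rwa [LinearPMap.mkSpanSingleton_apply] at this
  -- the set M
  set M : Set (Fin n → ℝ) := {a | (∀ i, 0 ≤ a i) ∧ ∑ i, a i = 1 ∧
    ∀ x : Fin n → ℝ, ∑ i, a i * (-(x i)) ≤ ρ x} with hM
  -- from a linear g ≤ ρ, build a ∈ M with ∑ a i * (-(x i)) = g x
  have build : ∀ g : (Fin n → ℝ) →ₗ[ℝ] ℝ, (∀ y, g y ≤ ρ y) →
      ∃ a ∈ M, ∀ y : Fin n → ℝ, ∑ i, a i * (-(y i)) = g y := by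
    intro g hg
    set a : Fin n → ℝ := fun i => -(g (fun j => if i = j then 1 else 0)) with ha
    have hrep : ∀ y : Fin n → ℝ, ∑ i, a i * (-(y i)) = g y := by
      intro y
      rw [LinearMap.pi_apply_eq_sum_univ g y]
      apply Finset.sum_congr rfl
      intro i _
      simp [ha, smul_eq_mul]
      ring
    have hnn : ∀ i, 0 ≤ a i := by
      intro i
      have h1 : g (fun j => if i = j then 1 else 0) ≤ ρ (fun j => if i = j then 1 else 0) :=
        hg _
      have h2 : ρ (fun j => if i = j then 1 else 0) ≤ ρ 0 :=
        h_mono _ _ (fun j => by dsimp; split <;> norm_num)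
      simp only [ha, neg_nonneg]
      rw [hρ0] at h2
      linarith
    have hone : ρ (fun _ : Fin n => (1:ℝ)) = -1 := by
      have := h_cash 0 1
      simpa [hρ0] using this
    have hmone : ρ (fun _ : Fin n => (-1:ℝ)) = 1 := by
      have := h_cash 0 (-1)
      simpa [hρ0] using this
    have hsum : ∑ i, a i = 1 := by
      have e1 : ∑ i, a i * (-(((fun _ : Fin n => (1:ℝ))) i)) = g (fun _ => 1) := hrep _
      have e2 : ∑ i, a i * (-(((fun _ : Fin n => (-1:ℝ))) i)) = g (fun _ => -1) := hrep _
      have le1 : g (fun _ : Fin n => (1:ℝ)) ≤ -1 := (hg _).trans hone.le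
      have le2 : g (fun _ : Fin n => (-1:ℝ)) ≤ 1 := (hg _).trans hmone.le
      simp only [mul_neg, mul_one, neg_neg] at e1 e2
      have hneg : ∑ i, -a i = -∑ i, a i := by simp
      rw [hneg] at e1
      linarith
    refine ⟨a, ⟨hnn, hsum, fun x => ?_⟩, hrep⟩
    rw [hrep x]
    exact hg x
  -- one fixed element of M
  obtain ⟨g₀, _, hg₀⟩ := key (fun _ => 1) (by
    intro h
    have := congrFun h ⟨0, hn⟩
    simp at this)
  obtain ⟨a₀, ha₀M, _⟩ := build g₀ hg₀
  refine ⟨M, ⟨a₀, ha₀M⟩, ?_, ?_, ?_, ?_⟩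
  · -- convex
    rintro a ⟨ha1, ha2, ha3⟩ b ⟨hb1, hb2, hb3⟩ s t hs ht hst
    refine ⟨fun i => ?_, ?_, ?_⟩
    · have h1 := ha1 i
      have h2 := hb1 i
      simp only [Pi.add_apply, Pi.smul_apply, smul_eq_mul]
      positivity
    · simp only [Pi.add_apply, Pi.smul_apply, smul_eq_mul]
      rw [Finset.sum_add_distrib, ← Finset.mul_sum, ← Finset.mul_sum, ha2, hb2]
      linarith
    · intro x
      have : ∑ i, (s • a + t • b) i * (-(x i))
          = s * ∑ i, a i * (-(x i)) + t * ∑ i, b i * (-(x i)) := by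
        rw [Finset.mul_sum, Finset.mul_sum, ← Finset.sum_add_distrib]
        apply Finset.sum_congr rfl
        intro i _
        simp [smul_eq_mul]; ring
      rw [this]
      calc s * ∑ i, a i * (-(x i)) + t * ∑ i, b i * (-(x i))
          ≤ s * ρ x + t * ρ x := by
            gcongr <;> [exact ha3 x; exact hb3 x]
        _ = ρ x := by rw [← add_mul, hst, one_mul]
  · -- compact
    have hsub : M ⊆ Set.Icc (0 : Fin n → ℝ) 1 := by
      rintro a ⟨ha1, ha2, _⟩
      constructor
      · intro i; exact ha1 i
      · intro i
        have : a i ≤ ∑ j, a j := Finset.single_le_sum (fun j _ => ha1 j) (Finset.mem_univ i)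
        rw [ha2] at this
        exact this
    have hclosed : IsClosed M := by
      have h1 : IsClosed {a : Fin n → ℝ | ∀ i, 0 ≤ a i} := by
        have : {a : Fin n → ℝ | ∀ i, 0 ≤ a i} = ⋂ i, {a : Fin n → ℝ | 0 ≤ a i} := by
          ext a; simp
        rw [this]
        exact isClosed_iInter fun i => isClosed_le continuous_const (continuous_apply i)
      have hc2 : Continuous (fun a : Fin n → ℝ => ∑ i, a i) :=
        continuous_finset_sum _ fun i _ => continuous_apply i
      have h2 : IsClosed {a : Fin n → ℝ | ∑ i, a i = 1} :=
        isClosed_eq hc2 continuous_const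
      have h3 : IsClosed {a : Fin n → ℝ | ∀ x : Fin n → ℝ, ∑ i, a i * (-(x i)) ≤ ρ x} := by
        have : {a : Fin n → ℝ | ∀ x : Fin n → ℝ, ∑ i, a i * (-(x i)) ≤ ρ x}
            = ⋂ x : Fin n → ℝ, {a : Fin n → ℝ | ∑ i, a i * (-(x i)) ≤ ρ x} := by
          ext a; simp
        rw [this]
        exact isClosed_iInter fun x => isClosed_le
          (continuous_finset_sum _ fun i _ => (continuous_apply i).mul continuous_const)
          continuous_const
      have : M = {a : Fin n → ℝ | ∀ i, 0 ≤ a i} ∩ ({a : Fin n → ℝ | ∑ i, a i = 1}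
          ∩ {a : Fin n → ℝ | ∀ x : Fin n → ℝ, ∑ i, a i * (-(x i)) ≤ ρ x}) := rfl
      rw [this]
      exact h1.inter (h2.inter h3)
    exact IsCompact.of_isClosed_subset isCompact_Icc hclosed hsub
  · rintro a ⟨ha1, ha2, _⟩
    exact ⟨ha1, ha2⟩
  · intro x
    rcases eq_or_ne x 0 with rfl | hx
    · refine ⟨a₀, ha₀M, ?_, ?_⟩
      · simp [hρ0]
      · rintro b ⟨_, _, hb3⟩
        exact hb3 0
    · obtain ⟨g, hgx, hgle⟩ := key x hx
      obtain ⟨a, haM, hrep⟩ := build g hgle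
      refine ⟨a, haM, by rw [hrep x, hgx], ?_⟩
      rintro b ⟨_, _, hb3⟩
      exact hb3 x
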